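/- Let λ > 0, 0 < μ ≤ λ²/8 (low mobility regime), and m₀ ∈ (−1, 0). The unique bounded solution (z, m) of the constant-mobility system on [0,∞) with m(0) = m₀ satisfies z(t) > 0 for all t ≥ 0 and m is strictly decreasing on [0,∞), with m(t) → −1 as t → ∞. -/

import Mathlib

open Set Filter

set_option maxHeartbeats 1000000

lemma cm_monotoneOn_Icc {f : ℝ → ℝ} {a b : ℝ}
    (hc : ContinuousOn f (Icc a b))
    (hd : ∀ x ∈ Ioo a b, ∃ d, HasDerivAt f d x ∧ 0 ≤ d) :
    MonotoneOn f (Icc a b) := by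
  apply monotoneOn_of_deriv_nonneg (convex_Icc a b) hc
  · rw [interior_Icc]; intro x hx
    obtain ⟨d, hdd, _⟩ := hd x hx
    exact hdd.differentiableAt.differentiableWithinAt
  · rw [interior_Icc]; intro x hx
    obtain ⟨d, hdd, hd0⟩ := hd x hx
    rw [hdd.deriv]; exact hd0

lemma cm_antitoneOn_Icc {f : ℝ → ℝ} {a b : ℝ}
    (hc : ContinuousOn f (Icc a b))
    (hd : ∀ x ∈ Ioo a b, ∃ d, HasDerivAt f d x ∧ d ≤ 0) :
    AntitoneOn f (Icc a b) := by
  apply antitoneOn_of_deriv_nonpos (convex_Icc a b) hc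
  · rw [interior_Icc]; intro x hx
    obtain ⟨d, hdd, _⟩ := hd x hx
    exact hdd.differentiableAt.differentiableWithinAt
  · rw [interior_Icc]; intro x hx
    obtain ⟨d, hdd, hd0⟩ := hd x hx
    rw [hdd.deriv]; exact hd0

lemma cm_antitoneOn_Ici {f : ℝ → ℝ} {a : ℝ}
    (hc : ContinuousOn f (Ici a))
    (hd : ∀ x ∈ Ioi a, ∃ d, HasDerivAt f d x ∧ d ≤ 0) :
    AntitoneOn f (Ici a) := by
  apply antitoneOn_of_deriv_nonpos (convex_Ici a) hc
  · rw [interior_Ici]; intro x hx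
    obtain ⟨d, hdd, _⟩ := hd x hx
    exact hdd.differentiableAt.differentiableWithinAt
  · rw [interior_Ici]; intro x hx
    obtain ⟨d, hdd, hd0⟩ := hd x hx
    rw [hdd.deriv]; exact hd0

lemma cm_eventually_lt {f : ℝ → ℝ} {d σ : ℝ} (hσ : 0 ≤ σ)
    (hf : HasDerivWithinAt f d (Ici 0) σ) (hd : d < 0) :
    ∀ᶠ t in nhdsWithin σ (Ioi σ), f t < f σ := by
  have h := hasDerivWithinAt_iff_tendsto_slope.mp hf
  have hmono : nhdsWithin σ (Ioi σ) ≤ nhdsWithin σ (Ici 0 \ {σ}) :=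
    nhdsWithin_mono σ (fun t ht => ⟨le_trans hσ (le_of_lt ht), ne_of_gt ht⟩)
  have h' : Tendsto (slope f σ) (nhdsWithin σ (Ioi σ)) (nhds d) := h.mono_left hmono
  have h2 : ∀ᶠ t in nhdsWithin σ (Ioi σ), slope f σ t < 0 := h'.eventually (eventually_lt_nhds hd)
  filter_upwards [h2, self_mem_nhdsWithin] with t ht1 ht2
  rw [slope_def_field] at ht1
  have htσ : (0:ℝ) < t - σ := sub_pos.mpr ht2
  rcases (div_neg_iff).mp ht1 with ⟨h1, h2⟩ | ⟨h1, h2⟩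
  · linarith
  · linarith

/-- Low mobility regime `0 < μ ≤ λ²/8`, `m₀ ∈ (−1,0)`: the (unique) bounded solution
`(z,m)` of the constant-mobility system on `[0,∞)` with `m(0) = m₀` satisfies
`z(t) > 0` for all `t ≥ 0`, `m` is strictly decreasing on `[0,∞)`, and `m(t) → −1`. -/
theorem constant_mobility_low_mobility_monotone_consensus
    (lam mu m₀ : ℝ) (hlam : 0 < lam) (hmu : 0 < mu) (hlow : mu ≤ lam ^ 2 / 8)
    (hm₀ : m₀ ∈ Set.Ioo (-1 : ℝ) 0)
    (z m : ℝ → ℝ)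
    (hsol : ∀ t ∈ Set.Ici (0 : ℝ),
      HasDerivWithinAt z ((mu / 2) * z t * |z t| + lam * z t + 2 * m t) (Set.Ici 0) t ∧
      HasDerivWithinAt m (-(mu * m t * |z t|) - mu * z t) (Set.Ici 0) t)
    (hbd : ∃ C : ℝ, ∀ t ∈ Set.Ici (0 : ℝ), |z t| ≤ C ∧ |m t| ≤ C)
    (hinit : m 0 = m₀) :
    (∀ t ∈ Set.Ici (0 : ℝ), 0 < z t) ∧
    StrictAntiOn m (Set.Ici (0 : ℝ)) ∧
    Filter.Tendsto m Filter.atTop (nhds (-1)) := by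
  obtain ⟨C, hC⟩ := hbd
  obtain ⟨hm₀l, hm₀r⟩ := hm₀
  have hC0 : (0:ℝ) ≤ C := le_trans (abs_nonneg _) (hC 0 Set.self_mem_Ici).1
  have hzc : ContinuousOn z (Ici 0) := fun t ht => ((hsol t ht).1).continuousWithinAt
  have hmc : ContinuousOn m (Ici 0) := fun t ht => ((hsol t ht).2).continuousWithinAt
  have hzD : ∀ t : ℝ, 0 < t →
      HasDerivAt z ((mu / 2) * z t * |z t| + lam * z t + 2 * m t) t :=
    fun t ht => ((hsol t ht.le).1).hasDerivAt (Ici_mem_nhds ht)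
  have hmD : ∀ t : ℝ, 0 < t →
      HasDerivAt m (-(mu * m t * |z t|) - mu * z t) t :=
    fun t ht => ((hsol t ht.le).2).hasDerivAt (Ici_mem_nhds ht)
  -- Step 1 : m (t) > -1 for all t ≥ 0
  have hm1 : ∀ t : ℝ, 0 ≤ t → -1 < m t := by
    by_contra hcon
    push_neg at hcon
    obtain ⟨T, hT0, hT⟩ := hcon
    set S : Set ℝ := Icc 0 T ∩ m ⁻¹' Iic (-1) with hSdef
    have hSclosed : IsClosed S :=
      (hmc.mono Icc_subset_Ici_self).preimage_isClosed_of_isClosed isClosed_Icc isClosed_Iic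
    have hSne : S.Nonempty := ⟨T, ⟨hT0, le_rfl⟩, hT⟩
    have hSbdd : BddBelow S := ⟨0, fun s hs => hs.1.1⟩
    set σ := sInf S with hσdef
    have hσS : σ ∈ S := hSclosed.csInf_mem hSne hSbdd
    have hσ0 : 0 ≤ σ := hσS.1.1
    have hmσ : m σ ≤ -1 := hσS.2
    have hσpos : 0 < σ := by
      rcases hσ0.lt_or_eq with h | h
      · exact h
      · exfalso; rw [← h, hinit] at hmσ; linarith
    have hbefore : ∀ s, 0 ≤ s → s < σ → -1 < m s := by
      intro s hs hsσ
      by_contra h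
      push_neg at h
      have : σ ≤ s := csInf_le hSbdd ⟨⟨hs, le_trans hsσ.le hσS.1.2⟩, h⟩
      linarith
    set φ : ℝ → ℝ := fun t => (m t + 1) * Real.exp (mu * C * t) with hφdef
    have hφmono : MonotoneOn φ (Icc 0 σ) := by
      apply cm_monotoneOn_Icc
      · exact ((hmc.mono Icc_subset_Ici_self).add continuousOn_const).mul
          ((Real.continuous_exp.comp (continuous_const.mul continuous_id)).continuousOn)
      · intro x hx
        have hx0 : 0 < x := hx.1
        have hd1 : HasDerivAt (fun t => m t + 1) (-(mu * m x * |z x|) - mu * z x) x :=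
          (hmD x hx0).add_const 1
        have hd2 : HasDerivAt (fun t => Real.exp (mu * C * t))
            (Real.exp (mu * C * x) * (mu * C)) x := by
          have h1 : HasDerivAt (fun t : ℝ => mu * C * t) (mu * C) x := by
            simpa using (hasDerivAt_id x).const_mul (mu * C)
          simpa using h1.exp
        refine ⟨_, hd1.mul hd2, ?_⟩
        have hmx : 0 ≤ m x + 1 := by linarith [hbefore x hx0.le hx.2]
        have hzx : |z x| ≤ C := (hC x hx0.le).1
        have hzx2 : z x ≤ |z x| := le_abs_self _
        have he : 0 < Real.exp (mu * C * x) := Real.exp_pos _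
        have hinner : 0 ≤ (-(mu * m x * |z x|) - mu * z x) + (m x + 1) * (mu * C) := by
          nlinarith [mul_nonneg (mul_nonneg hmu.le (sub_nonneg.mpr hzx)) hmx,
            abs_nonneg (z x)]
        nlinarith [hinner, he]
    have h1 : φ 0 ≤ φ σ := hφmono ⟨le_rfl, hσ0⟩ ⟨hσ0, le_rfl⟩ hσ0
    have h2 : φ 0 = m₀ + 1 := by simp [hφdef, hinit]
    have h3 : φ σ ≤ 0 := by
      have hle : m σ + 1 ≤ 0 := by linarith
      have he : 0 < Real.exp (mu * C * σ) := Real.exp_pos _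
      simp only [hφdef]
      nlinarith
    rw [h2] at h1
    linarith
  -- Step 2 : z(t) > 0 for all t ≥ 0
  have hz : ∀ t : ℝ, 0 ≤ t → 0 < z t := by
    by_contra hcon
    push_neg at hcon
    obtain ⟨t₀, ht₀0, ht₀⟩ := hcon
    obtain ⟨τ, hτ0, hzτ, hmτ⟩ : ∃ τ, 0 ≤ τ ∧ z τ ≤ 0 ∧ m τ < 0 := by
      rcases le_or_gt (z 0) 0 with h0 | h0
      · exact ⟨0, le_rfl, h0, by rw [hinit]; exact hm₀r⟩
      · set S : Set ℝ := Icc 0 t₀ ∩ z ⁻¹' Iic 0 with hSdef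
        have hSclosed : IsClosed S :=
          (hzc.mono Icc_subset_Ici_self).preimage_isClosed_of_isClosed isClosed_Icc isClosed_Iic
        have hSne : S.Nonempty := ⟨t₀, ⟨ht₀0, le_rfl⟩, ht₀⟩
        have hSbdd : BddBelow S := ⟨0, fun s hs => hs.1.1⟩
        set τ := sInf S with hτdef
        have hτS : τ ∈ S := hSclosed.csInf_mem hSne hSbdd
        have hτ0 : 0 ≤ τ := hτS.1.1
        have hzτ : z τ ≤ 0 := hτS.2
        have hbefore : ∀ s, 0 ≤ s → s < τ → 0 < z s := by
          intro s hs hsτ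
          by_contra h
          push_neg at h
          have : τ ≤ s := csInf_le hSbdd ⟨⟨hs, le_trans hsτ.le hτS.1.2⟩, h⟩
          linarith
        have hanti : AntitoneOn m (Icc 0 τ) := by
          apply cm_antitoneOn_Icc
          · exact hmc.mono Icc_subset_Ici_self
          · intro x hx
            refine ⟨_, hmD x hx.1, ?_⟩
            have hzx : 0 < z x := hbefore x hx.1.le hx.2
            have hm1x : -1 < m x := hm1 x hx.1.le
            rw [abs_of_pos hzx]
            nlinarith [mul_nonneg (mul_pos hmu hzx).le (by linarith : (0:ℝ) ≤ m x + 1)]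
        have hm0τ : m τ ≤ m₀ := by
          have := hanti (left_mem_Icc.mpr hτ0) (right_mem_Icc.mpr hτ0) hτ0
          rwa [hinit] at this
        exact ⟨τ, hτ0, hzτ, lt_of_le_of_lt hm0τ hm₀r⟩
    set k : ℝ := lam / 4 with hkdef
    set A : ℝ := 2 * k - mu * C - 1 with hAdef
    set u : ℝ → ℝ := fun t => m t + k * z t with hudef
    have hk0 : 0 < k := by rw [hkdef]; linarith
    have huτ : u τ < 0 := by
      have hkz : k * z τ ≤ 0 := mul_nonpos_of_nonneg_of_nonpos hk0.le hzτ
      simp only [hudef]; linarith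
    set ψ : ℝ → ℝ := fun t => u t * Real.exp (-(A * (t - τ))) with hψdef
    have hψτ : ψ τ = u τ := by simp [hψdef]
    have hucont : ContinuousOn u (Ici 0) := hmc.add (continuousOn_const.mul hzc)
    have hexpcont : Continuous (fun t : ℝ => Real.exp (-(A * (t - τ)))) :=
      Real.continuous_exp.comp ((continuous_const.mul (continuous_id.sub continuous_const)).neg)
    have hψcont : ContinuousOn ψ (Ici 0) := hucont.mul hexpcont.continuousOn
    have hu' : ∀ t : ℝ, 0 ≤ t → HasDerivWithinAt u
        ((-(mu * m t * |z t|) - mu * z t) +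
          k * ((mu / 2) * z t * |z t| + lam * z t + 2 * m t)) (Ici 0) t :=
      fun t ht => ((hsol t ht).2).add (((hsol t ht).1).const_mul k)
    have hexpD : ∀ s : ℝ, HasDerivAt (fun t => Real.exp (-(A * (t - τ))))
        (Real.exp (-(A * (s - τ))) * (-A)) s := by
      intro s
      have h1 : HasDerivAt (fun t : ℝ => -(A * (t - τ))) (-A) s := by
        simpa using (((hasDerivAt_id s).sub_const τ).const_mul A).fun_neg
      simpa using h1.exp
    have hψ' : ∀ t : ℝ, 0 ≤ t → HasDerivWithinAt ψ
        (((-(mu * m t * |z t|) - mu * z t) +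
            k * ((mu / 2) * z t * |z t| + lam * z t + 2 * m t)) *
              Real.exp (-(A * (t - τ))) +
          u t * (Real.exp (-(A * (t - τ))) * (-A))) (Ici 0) t :=
      fun t ht => (hu' t ht).mul ((hexpD t).hasDerivWithinAt)
    have hinv : ∀ t : ℝ, τ ≤ t → z t ≤ 0 ∧ ψ t ≤ u τ := by
      by_contra hcon2
      push_neg at hcon2
      obtain ⟨T, hTτ, hT⟩ := hcon2
      have hTnot : ¬(z T ≤ 0 ∧ ψ T ≤ u τ) := fun hp => absurd hp.2 (not_le.mpr (hT hp.1))
      set E : Set ℝ := {t | τ ≤ t ∧ ¬(z t ≤ 0 ∧ ψ t ≤ u τ)} with hEdef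
      have hEne : E.Nonempty := ⟨T, hTτ, hTnot⟩
      have hEbdd : BddBelow E := ⟨τ, fun s hs => hs.1⟩
      set σ := sInf E with hσdef
      have hστ : τ ≤ σ := le_csInf hEne (fun s hs => hs.1)
      have hσ0 : 0 ≤ σ := le_trans hτ0 hστ
      have hFbefore : ∀ s, τ ≤ s → s < σ → z s ≤ 0 ∧ ψ s ≤ u τ := by
        intro s hs hsσ
        by_contra h
        have : σ ≤ s := csInf_le hEbdd ⟨hs, h⟩
        linarith
      have hFσ : z σ ≤ 0 ∧ ψ σ ≤ u τ := by
        rcases eq_or_lt_of_le hστ with h | h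
        · rw [← h]; exact ⟨hzτ, le_of_eq hψτ⟩
        · have hσpos : 0 < σ := lt_of_le_of_lt hτ0 h
          have hev : ∀ᶠ s in nhdsWithin σ (Iio σ), z s ≤ 0 ∧ ψ s ≤ u τ := by
            have hm : Ioo τ σ ∈ nhdsWithin σ (Iio σ) :=
              Ioo_mem_nhdsLT_of_mem ⟨h, le_rfl⟩
            filter_upwards [hm] with s hs
            exact hFbefore s hs.1.le hs.2
          have hzt : Tendsto z (nhdsWithin σ (Iio σ)) (nhds (z σ)) :=
            ((hzD σ hσpos).continuousAt).continuousWithinAt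
          have hψt : Tendsto ψ (nhdsWithin σ (Iio σ)) (nhds (ψ σ)) := by
            have hu : ContinuousAt u σ :=
              ((hmD σ hσpos).continuousAt).add
                (continuousAt_const.mul ((hzD σ hσpos).continuousAt))
            exact (hu.mul hexpcont.continuousAt).continuousWithinAt
          exact ⟨le_of_tendsto hzt (hev.mono (fun s hs => hs.1)),
            le_of_tendsto hψt (hev.mono (fun s hs => hs.2))⟩
      have hevz : ∀ᶠ t in nhdsWithin σ (Ioi σ), z t ≤ 0 := by
        rcases lt_or_eq_of_le hFσ.1 with h | h
        · have hzt : Tendsto z (nhdsWithin σ (Ioi σ)) (nhds (z σ)) :=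
            ((hzc σ hσ0).mono (fun t (ht : t ∈ Ioi σ) => le_trans hσ0 (le_of_lt ht)))
          exact (hzt.eventually (eventually_lt_nhds h)).mono (fun t ht => ht.le)
        · have hzσ0 : z σ = 0 := h
          have huσ : u σ < 0 := by
            have h1 : ψ σ ≤ u τ := hFσ.2
            have h2 : 0 < Real.exp (-(A * (σ - τ))) := Real.exp_pos _
            by_contra hcon3
            push_neg at hcon3
            have : 0 ≤ ψ σ := mul_nonneg hcon3 h2.le
            linarith
          have hmσ : m σ < 0 := by
            have heq : u σ = m σ := by simp [hudef, hzσ0]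
            rw [heq] at huσ
            exact huσ
          have hd : HasDerivWithinAt z (2 * m σ) (Ici 0) σ := by
            have hh := (hsol σ hσ0).1
            rw [hzσ0] at hh
            simpa using hh
          have := cm_eventually_lt hσ0 hd (by linarith)
          filter_upwards [this] with t ht
          rw [hzσ0] at ht; exact ht.le
      have hevψ : ∀ᶠ t in nhdsWithin σ (Ioi σ), ψ t ≤ u τ := by
        rcases lt_or_eq_of_le hFσ.2 with h | h
        · have hψt : Tendsto ψ (nhdsWithin σ (Ioi σ)) (nhds (ψ σ)) :=
            ((hψcont σ hσ0).mono (fun t (ht : t ∈ Ioi σ) => le_trans hσ0 (le_of_lt ht)))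
          exact (hψt.eventually (eventually_lt_nhds h)).mono (fun t ht => ht.le)
        · have huσ : u σ < 0 := by
            have h2 : 0 < Real.exp (-(A * (σ - τ))) := Real.exp_pos _
            by_contra hcon3
            push_neg at hcon3
            have hge : 0 ≤ ψ σ := mul_nonneg hcon3 h2.le
            rw [h] at hge
            linarith
          have hzσ : z σ ≤ 0 := hFσ.1
          have hzσC : -C ≤ z σ := neg_le_of_abs_le (hC σ hσ0).1
          have habs : |z σ| = -z σ := abs_of_nonpos hzσ
          have hder := hψ' σ hσ0
          rw [habs] at hder
          have hdneg : ((-(mu * m σ * -z σ) - mu * z σ) +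
              k * ((mu / 2) * z σ * -z σ + lam * z σ + 2 * m σ)) *
                Real.exp (-(A * (σ - τ))) +
              u σ * (Real.exp (-(A * (σ - τ))) * (-A)) < 0 := by
            have he : 0 < Real.exp (-(A * (σ - τ))) := Real.exp_pos _
            have huσ' : m σ + k * z σ < 0 := huσ
            have t1 : (mu * (z σ + C)) * (m σ + k * z σ) ≤ 0 :=
              mul_nonpos_of_nonneg_of_nonpos
                (mul_nonneg hmu.le (by linarith)) huσ'.le
            have t2 : (lam ^ 2 / 8 - mu) * z σ ≤ 0 :=
              mul_nonpos_of_nonneg_of_nonpos (by linarith) hzσ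
            have t3 : 0 ≤ (3 * lam * mu / 8) * (z σ) ^ 2 := by positivity
            have hkey : ((-(mu * m σ * -z σ) - mu * z σ) +
                k * ((mu / 2) * z σ * -z σ + lam * z σ + 2 * m σ)) -
                A * u σ =
                (mu * (z σ + C)) * (m σ + k * z σ) + (m σ + k * z σ) +
                (lam ^ 2 / 8 - mu) * z σ - (3 * lam * mu / 8) * (z σ) ^ 2 := by
              simp only [hudef, hkdef, hAdef]
              ring
            have hsum : ((-(mu * m σ * -z σ) - mu * z σ) +
                k * ((mu / 2) * z σ * -z σ + lam * z σ + 2 * m σ)) -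
                A * u σ < 0 := by
              rw [hkey]; linarith
            have hm2 : (((-(mu * m σ * -z σ) - mu * z σ) +
                k * ((mu / 2) * z σ * -z σ + lam * z σ + 2 * m σ)) -
                A * u σ) * Real.exp (-(A * (σ - τ))) < 0 :=
              mul_neg_of_neg_of_pos hsum he
            linarith [hm2]
          have hevlt := cm_eventually_lt hσ0 hder hdneg
          filter_upwards [hevlt] with t ht
          exact le_of_lt (h ▸ ht)
      obtain ⟨b, hbσ, hb⟩ := mem_nhdsGT_iff_exists_Ioo_subset.mp (hevz.and hevψ)
      obtain ⟨t, htE, htb⟩ := exists_lt_of_csInf_lt hEne (show sInf E < b from hbσ)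
      have hσt : σ ≤ t := csInf_le hEbdd htE
      rcases eq_or_lt_of_le hσt with hh | hh
      · exact htE.2 (hh ▸ hFσ)
      · exact htE.2 (hb ⟨hh, htb⟩)
    have hzle : ∀ t, τ ≤ t → z t ≤ 0 := fun t ht => (hinv t ht).1
    have huneg : ∀ t, τ ≤ t → u t < 0 := by
      intro t ht
      have h1 := (hinv t ht).2
      have h2 : 0 < Real.exp (-(A * (t - τ))) := Real.exp_pos _
      by_contra hc3
      push_neg at hc3
      have : 0 ≤ ψ t := mul_nonneg hc3 h2.le
      linarith
    have hdτneg : (mu/2) * z τ * |z τ| + lam * z τ + 2 * m τ < 0 := by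
      rw [abs_of_nonpos hzτ]
      nlinarith [sq_nonneg (z τ)]
    obtain ⟨t₁, ht₁⟩ := ((cm_eventually_lt hτ0 (hsol τ hτ0).1 hdτneg).and
      self_mem_nhdsWithin).exists
    have ht₁P : z t₁ < z τ := ht₁.1
    have ht₁σ : τ < t₁ := ht₁.2
    have hzt₁ : z t₁ < 0 := lt_of_lt_of_le ht₁P hzτ
    set W : ℝ → ℝ := fun t => z t * Real.exp (-(lam/2) * t) with hWdef
    have hWanti : AntitoneOn W (Ici τ) := by
      apply cm_antitoneOn_Ici
      · exact (hzc.mono (Ici_subset_Ici.mpr hτ0)).mul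
          ((Real.continuous_exp.comp (continuous_const.mul continuous_id)).continuousOn)
      · intro x hx
        have hxτ : τ < x := hx
        have hx0 : 0 < x := lt_of_le_of_lt hτ0 hxτ
        have hzx : z x ≤ 0 := hzle x hxτ.le
        have hux : u x < 0 := huneg x hxτ.le
        have hE : HasDerivAt (fun t => Real.exp (-(lam/2) * t))
            (Real.exp (-(lam/2) * x) * (-(lam/2))) x := by
          have h1 : HasDerivAt (fun t : ℝ => -(lam/2) * t) (-(lam/2)) x := by
            simpa using (hasDerivAt_id x).const_mul (-(lam/2))
          simpa using h1.exp
        refine ⟨_, (hzD x hx0).mul hE, ?_⟩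
        rw [abs_of_nonpos hzx]
        have he : 0 < Real.exp (-(lam/2) * x) := Real.exp_pos _
        have hux' : m x + k * z x < 0 := hux
        simp only [hkdef] at hux'
        have hz' : (mu/2) * z x * -z x + lam * z x + 2 * m x - (lam/2) * z x ≤ 0 := by
          nlinarith [sq_nonneg (z x)]
        nlinarith [he, hz']
    have hWt₁ : W t₁ < 0 := mul_neg_of_neg_of_pos hzt₁ (Real.exp_pos _)
    set R : ℝ := (C + 1) / (-W t₁) with hRdef
    have hR0 : 0 < R := div_pos (by linarith) (by linarith)
    set t₂ : ℝ := max t₁ ((2/lam) * Real.log R) with ht₂def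
    have ht₂t₁ : t₁ ≤ t₂ := le_max_left _ _
    have hWle : W t₂ ≤ W t₁ :=
      hWanti (mem_Ici.mpr ht₁σ.le) (mem_Ici.mpr (le_trans ht₁σ.le ht₂t₁)) ht₂t₁
    have hexpR : R ≤ Real.exp ((lam/2) * t₂) := by
      have h1 : (2/lam) * Real.log R ≤ t₂ := le_max_right _ _
      have h2 : Real.log R ≤ (lam/2) * t₂ := by
        have hstep := mul_le_mul_of_nonneg_left h1
          (le_of_lt (by positivity : (0:ℝ) < lam/2))
        calc Real.log R = (lam/2) * ((2/lam) * Real.log R) := by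
              field_simp
          _ ≤ (lam/2) * t₂ := hstep
      calc R = Real.exp (Real.log R) := (Real.exp_log hR0).symm
        _ ≤ Real.exp ((lam/2) * t₂) := Real.exp_le_exp.mpr h2
    have hzt₂ : z t₂ = W t₂ * Real.exp ((lam/2) * t₂) := by
      simp only [hWdef]
      rw [mul_assoc, ← Real.exp_add]
      norm_num
    have hzval : z t₂ ≤ -(C+1) := by
      rw [hzt₂]
      have s1 : W t₂ * Real.exp ((lam/2) * t₂) ≤ W t₁ * Real.exp ((lam/2) * t₂) :=
        mul_le_mul_of_nonneg_right hWle (Real.exp_pos _).le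
      have s2 : W t₁ * Real.exp ((lam/2) * t₂) ≤ W t₁ * R :=
        mul_le_mul_of_nonpos_left hexpR hWt₁.le
      have s3 : W t₁ * R = -(C+1) := by
        have hne : -W t₁ ≠ 0 := ne_of_gt (by linarith)
        have hne' : W t₁ ≠ 0 := ne_of_lt hWt₁
        rw [hRdef]
        field_simp
      linarith
    have ht₂0 : 0 ≤ t₂ := le_trans hτ0 (le_trans ht₁σ.le ht₂t₁)
    have := neg_le_of_abs_le (hC t₂ ht₂0).1
    linarith
  -- Step 3 : m is strictly decreasing on [0,∞)
  have hsa : StrictAntiOn m (Ici 0) := by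
    apply strictAntiOn_of_deriv_neg (convex_Ici 0) hmc
    intro x hx
    rw [interior_Ici] at hx
    rw [(hmD x hx).deriv]
    have hzx : 0 < z x := hz x hx.le
    have hm1x : -1 < m x := hm1 x hx.le
    rw [abs_of_pos hzx]
    nlinarith [mul_pos (mul_pos hmu hzx) (show (0:ℝ) < m x + 1 by linarith)]
  refine ⟨fun t ht => hz t ht, hsa, ?_⟩
  -- Step 4 : m tends to -1
  have hanti : AntitoneOn m (Ici 0) := hsa.antitoneOn
  set f : ℝ → ℝ := fun t => m (max t 0) with hfdef
  have hfanti : Antitone f := fun s t hst =>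
    hanti (mem_Ici.mpr (le_max_right s 0)) (mem_Ici.mpr (le_max_right t 0))
      (max_le_max hst le_rfl)
  have hfbdd : BddBelow (range f) := by
    refine ⟨-1, ?_⟩
    rintro x ⟨t, rfl⟩
    exact (hm1 _ (le_max_right t 0)).le
  have hlim : Tendsto f atTop (nhds (⨅ i, f i)) := tendsto_atTop_ciInf hfanti hfbdd
  set L := ⨅ i, f i with hLdef
  have hLf : ∀ t, L ≤ f t := fun t => ciInf_le hfbdd t
  have hL1 : -1 ≤ L := le_ciInf (fun t => (hm1 _ (le_max_right t 0)).le)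
  have hmf : ∀ t : ℝ, 0 ≤ t → f t = m t := fun t ht => by
    simp only [hfdef]; rw [max_eq_left ht]
  have hmL : ∀ t : ℝ, 0 ≤ t → L ≤ m t := fun t ht => (hmf t ht) ▸ hLf t
  have hlimm : Tendsto m atTop (nhds L) := by
    apply hlim.congr'
    filter_upwards [eventually_ge_atTop (0:ℝ)] with t ht
    exact hmf t ht
  have hLeq : L = -1 := by
    by_contra hne
    have hL : -1 < L := lt_of_le_of_ne hL1 (Ne.symm hne)
    set M₁ : ℝ := m 1 with hM₁def
    have hM₁ : M₁ < m₀ := by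
      have := hsa (mem_Ici.mpr le_rfl) (mem_Ici.mpr (by norm_num : (0:ℝ) ≤ 1)) (by norm_num)
      rwa [hinit] at this
    have hM₁0 : M₁ < 0 := lt_trans hM₁ hm₀r
    have hM₁1 : -1 < M₁ := hm1 1 (by norm_num)
    set ε : ℝ := min 1 ((-M₁) / (mu/2 + lam)) with hεdef
    have hden : 0 < mu/2 + lam := by linarith
    have hε0 : 0 < ε := lt_min one_pos (div_pos (by linarith) hden)
    have hε1 : ε ≤ 1 := min_le_left _ _
    have hεM : (mu/2 + lam) * ε ≤ -M₁ := by
      have h1 : ε ≤ (-M₁) / (mu/2 + lam) := min_le_right _ _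
      calc (mu/2 + lam) * ε ≤ (mu/2 + lam) * ((-M₁)/(mu/2 + lam)) :=
            mul_le_mul_of_nonneg_left h1 hden.le
        _ = -M₁ := by field_simp
    have hkey : (mu/2) * ε^2 + lam * ε ≤ -M₁ := by
      nlinarith [hεM, mul_nonneg hmu.le (mul_nonneg hε0.le (sub_nonneg.mpr hε1))]
    -- A) there is t₂ ≥ 1 with z t₂ ≤ ε
    obtain ⟨t₂, ht₂1, ht₂ε⟩ : ∃ t₂ : ℝ, 1 ≤ t₂ ∧ z t₂ ≤ ε := by
      by_contra hcon
      push_neg at hcon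
      set β : ℝ := mu * ε * (L + 1) with hβdef
      have hβ0 : 0 < β := by
        apply mul_pos (mul_pos hmu hε0); linarith
      have hHanti : AntitoneOn (fun t => m t + β * t) (Ici 1) := by
        apply cm_antitoneOn_Ici
        · exact (hmc.mono (Ici_subset_Ici.mpr (by norm_num))).add
            (continuousOn_const.mul continuousOn_id)
        · intro x hx
          have hx1 : (1:ℝ) < x := hx
          have hx0 : 0 < x := by linarith
          have hd : HasDerivAt (fun t => m t + β * t)
              ((-(mu * m x * |z x|) - mu * z x) + β) x := by
            have h2 : HasDerivAt (fun t : ℝ => β * t) β x := by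
              simpa using (hasDerivAt_id x).const_mul β
            exact (hmD x hx0).add h2
          refine ⟨_, hd, ?_⟩
          have hzx : ε < z x := hcon x hx1.le
          have hzx0 : 0 < z x := lt_trans hε0 hzx
          have hmx : L ≤ m x := hmL x hx0.le
          rw [abs_of_pos hzx0]
          have hfact : mu * ε * (L + 1) ≤ mu * z x * (m x + 1) := by
            apply mul_le_mul
            · exact mul_le_mul_of_nonneg_left hzx.le hmu.le
            · linarith
            · linarith
            · positivity
          simp only [hβdef]
          nlinarith [hfact]
      set tbig : ℝ := 1 + (M₁ + 2) / β with htbigdef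
      have htbig1 : 1 ≤ tbig := by
        have : 0 < (M₁ + 2) / β := div_pos (by linarith) hβ0
        simp only [htbigdef]; linarith
      have hHle : m tbig + β * tbig ≤ m 1 + β * 1 :=
        hHanti (mem_Ici.mpr le_rfl) (mem_Ici.mpr htbig1) htbig1
      have hmbig : m tbig ≤ -2 := by
        have hβt : β * tbig = β + (M₁ + 2) := by
          simp only [htbigdef]
          field_simp
        nlinarith [hHle, hβt]
      have := hm1 tbig (by linarith)
      linarith
    have ht₂0 : 0 ≤ t₂ := by linarith
    -- B) z stays ≤ ε after t₂
    have hstay : ∀ t, t₂ ≤ t → z t ≤ ε := by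
      by_contra hcon
      push_neg at hcon
      obtain ⟨T, hTt₂, hT⟩ := hcon
      set E : Set ℝ := {t | t₂ ≤ t ∧ ε < z t} with hEdef
      have hEne : E.Nonempty := ⟨T, hTt₂, hT⟩
      have hEbdd : BddBelow E := ⟨t₂, fun s hs => hs.1⟩
      set σ := sInf E with hσdef
      have hσt₂ : t₂ ≤ σ := le_csInf hEne (fun s hs => hs.1)
      have hσ0 : 0 ≤ σ := le_trans ht₂0 hσt₂
      have hFbefore : ∀ s, t₂ ≤ s → s < σ → z s ≤ ε := by
        intro s hs hsσ
        by_contra h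
        push_neg at h
        have : σ ≤ s := csInf_le hEbdd ⟨hs, h⟩
        linarith
      have hFσ : z σ ≤ ε := by
        rcases eq_or_lt_of_le hσt₂ with h | h
        · rw [← h]; exact ht₂ε
        · have hσpos : 0 < σ := lt_of_le_of_lt ht₂0 h
          have hev : ∀ᶠ s in nhdsWithin σ (Iio σ), z s ≤ ε := by
            have hm : Ioo t₂ σ ∈ nhdsWithin σ (Iio σ) :=
              Ioo_mem_nhdsLT_of_mem ⟨h, le_rfl⟩
            filter_upwards [hm] with s hs
            exact hFbefore s hs.1.le hs.2
          exact le_of_tendsto ((hzD σ hσpos).continuousAt.continuousWithinAt) hev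
      have hevz : ∀ᶠ t in nhdsWithin σ (Ioi σ), z t ≤ ε := by
        rcases lt_or_eq_of_le hFσ with h | h
        · have hzt : Tendsto z (nhdsWithin σ (Ioi σ)) (nhds (z σ)) :=
            ((hzc σ hσ0).mono (fun t (ht : t ∈ Ioi σ) => le_trans hσ0 (le_of_lt ht)))
          exact (hzt.eventually (eventually_lt_nhds h)).mono (fun t ht => ht.le)
        · have hzσ : z σ = ε := h
          have hmσ : m σ ≤ M₁ := by
            apply hanti (mem_Ici.mpr (by norm_num : (0:ℝ) ≤ 1)) (mem_Ici.mpr hσ0)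
            linarith [hσt₂, ht₂1]
          have hdneg : (mu/2) * z σ * |z σ| + lam * z σ + 2 * m σ < 0 := by
            rw [hzσ, abs_of_pos hε0]
            nlinarith [hkey, hmσ, hM₁0]
          have := cm_eventually_lt hσ0 (hsol σ hσ0).1 hdneg
          filter_upwards [this] with t ht
          rw [hzσ] at ht
          exact ht.le
      obtain ⟨b, hbσ, hb⟩ := mem_nhdsGT_iff_exists_Ioo_subset.mp hevz
      obtain ⟨t, htE, htb⟩ := exists_lt_of_csInf_lt hEne (show sInf E < b from hbσ)
      have hσt : σ ≤ t := csInf_le hEbdd htE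
      rcases eq_or_lt_of_le hσt with hh | hh
      · exact absurd (hh ▸ hFσ) (not_le.mpr htE.2)
      · exact absurd (hb ⟨hh, htb⟩) (not_le.mpr htE.2)
    -- C) then z decreases linearly, contradiction
    have hHanti : AntitoneOn (fun t => z t - M₁ * t) (Ici t₂) := by
      apply cm_antitoneOn_Ici
      · exact (hzc.mono (Ici_subset_Ici.mpr ht₂0)).sub
          (continuousOn_const.mul continuousOn_id)
      · intro x hx
        have hxt₂ : t₂ < x := hx
        have hx0 : 0 < x := lt_of_le_of_lt ht₂0 hxt₂
        have hd : HasDerivAt (fun t => z t - M₁ * t)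
            (((mu/2) * z x * |z x| + lam * z x + 2 * m x) - M₁) x := by
          have h2 : HasDerivAt (fun t : ℝ => M₁ * t) M₁ x := by
            simpa using (hasDerivAt_id x).const_mul M₁
          exact (hzD x hx0).sub h2
        refine ⟨_, hd, ?_⟩
        have hzx : 0 < z x := hz x hx0.le
        have hzxε : z x ≤ ε := hstay x hxt₂.le
        have hmx : m x ≤ M₁ := hanti (mem_Ici.mpr (by norm_num : (0:ℝ) ≤ 1))
          (mem_Ici.mpr hx0.le) (by linarith [ht₂1])
        rw [abs_of_pos hzx]
        nlinarith [hkey, mul_nonneg hmu.le (mul_nonneg (sub_nonneg.mpr hzxε)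
          (by linarith : (0:ℝ) ≤ ε + z x)), mul_le_mul_of_nonneg_left hzxε hlam.le]
    set t₃ : ℝ := t₂ + (z t₂ + 1) / (-M₁) with ht₃def
    have ht₃t₂ : t₂ ≤ t₃ := by
      have : 0 < (z t₂ + 1) / (-M₁) := div_pos (by linarith [hz t₂ ht₂0]) (by linarith)
      simp only [ht₃def]; linarith
    have hle : z t₃ - M₁ * t₃ ≤ z t₂ - M₁ * t₂ :=
      hHanti (mem_Ici.mpr le_rfl) (mem_Ici.mpr ht₃t₂) ht₃t₂
    have hM₁t₃ : M₁ * t₃ = M₁ * t₂ - (z t₂ + 1) := by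
      have hne : -M₁ ≠ 0 := ne_of_gt (by linarith)
      have hne' : M₁ ≠ 0 := ne_of_lt hM₁0
      rw [ht₃def]
      field_simp
      ring
    have hzt₃ : z t₃ ≤ -1 := by nlinarith [hle, hM₁t₃]
    have := hz t₃ (le_trans ht₂0 ht₃t₂)
    linarith
  rw [← hLeq]
  exact hlimm
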